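/- arXiv:2311.07886 — 11 statements merged into one kernel-verified Lean document; each statement's English description precedes it below -/
import Mathlib

section
/- For every natural number n there is a strategy for the n-player, two-colour hat game that guarantees at most one wrong guess. Precisely: there exists a function guess : (Fin n → Bool) → Fin n → Bool such that (a) for every i : Fin n and all hat assignments x, y : Fin n → Bool, if x j = y j for all j > i and guess x j = guess y j for all j < i, then guess x i = guess y i; and (b) for every hat assignment x : Fin n → Bool, the set {i : Fin n | guess x i ≠ x i} has at most one element. -/
/-- For every natural number `n` there is a strategy for the `n`-player, two-colour
hat game that guarantees at most one wrong guess. -/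
theorem finite_hat_game_at_most_one_error (n : ℕ) :
    ∃ guess : (Fin n → Bool) → Fin n → Bool,
      (∀ (i : Fin n) (x y : Fin n → Bool),
          (∀ j, i < j → x j = y j) → (∀ j, j < i → guess x j = guess y j) →
          guess x i = guess y i) ∧
      (∀ x : Fin n → Bool, {i : Fin n | guess x i ≠ x i}.Subsingleton) := by
  set g : Bool → ZMod 2 := fun b => if b then 1 else 0 with hgdef
  set f : (Fin n → Bool) → Bool := fun x =>
    decide ((∑ j ∈ Finset.univ.filter (fun j : Fin n => (j : ℕ) ≠ 0), g (x j)) = 1) with hfdef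
  have hginj : ∀ a b : Bool, g a = g b → a = b := by decide
  have hdec : ∀ a b : ZMod 2, decide (a = 1) = decide (b = 1) → a = b := by decide
  refine ⟨fun x i => if (i : ℕ) = 0 then f x else x i, ?_, ?_⟩
  · intro i x y hx hg
    by_cases hi : (i : ℕ) = 0
    · simp only [hi, if_pos]
      have : (∑ j ∈ Finset.univ.filter (fun j : Fin n => (j : ℕ) ≠ 0), g (x j))
          = (∑ j ∈ Finset.univ.filter (fun j : Fin n => (j : ℕ) ≠ 0), g (y j)) := by
        apply Finset.sum_congr rfl
        intro j hj
        simp only [Finset.mem_filter] at hj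
        rw [hx j (by rw [Fin.lt_def]; omega)]
      exact congrArg (fun s => decide (s = (1 : ZMod 2))) this
    · simp only [hi, if_neg, if_false]
      -- player 0 exists
      have hn : 0 < n := lt_of_le_of_lt (Nat.zero_le _) i.isLt
      set z : Fin n := ⟨0, hn⟩ with hz
      have hzi : z < i := by rw [Fin.lt_def]; simp [hz]; omega
      have h0 := hg z hzi
      simp only [hz, if_pos] at h0
      have hsum := hdec _ _ h0
      have himem : i ∈ Finset.univ.filter (fun j : Fin n => (j : ℕ) ≠ 0) := by
        simp [hi]
      rw [← Finset.add_sum_erase _ _ himem, ← Finset.add_sum_erase _ _ himem] at hsum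
      have hrest : (∑ j ∈ (Finset.univ.filter (fun j : Fin n => (j : ℕ) ≠ 0)).erase i, g (x j))
          = (∑ j ∈ (Finset.univ.filter (fun j : Fin n => (j : ℕ) ≠ 0)).erase i, g (y j)) := by
        apply Finset.sum_congr rfl
        intro j hj
        simp only [Finset.mem_erase, Finset.mem_filter] at hj
        rcases lt_trichotomy j i with h | h | h
        · have := hg j h
          simp only [if_neg hj.2.2] at this
          rw [this]
        · exact absurd h hj.1
        · rw [hx j h]
      rw [hrest] at hsum
      have : g (x i) = g (y i) := by
        have := add_right_cancel hsum
        exact this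
      exact hginj _ _ this
  · intro x a ha b hb
    simp only [Set.mem_setOf_eq, ne_eq] at ha hb
    have ha' : (a : ℕ) = 0 := by by_contra h; simp [h] at ha
    have hb' : (b : ℕ) = 0 := by by_contra h; simp [h] at hb
    exact Fin.ext (ha'.trans hb'.symm)
end

section
/- For every natural number n and every k ≥ 1 there is a strategy for the n-player hat game with k hat colours that guarantees at most one wrong guess. Precisely: there exists a function guess : (Fin n → Fin k) → Fin n → Fin k such that (a) for every i : Fin n and all x, y : Fin n → Fin k, if x j = y j for all j > i and guess x j = guess y j for all j < i, then guess x i = guess y i; and (b) for every x : Fin n → Fin k, the set {i : Fin n | guess x i ≠ x i} has at most one element. -/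
/-- For every `n` and every `k ≥ 1` there is a strategy for the `n`-player hat game
with `k` hat colours that guarantees at most one wrong guess. -/
theorem finite_k_colour_hat_game_at_most_one_error (n k : ℕ) (hk : 1 ≤ k) :
    ∃ guess : (Fin n → Fin k) → Fin n → Fin k,
      (∀ (i : Fin n) (x y : Fin n → Fin k),
          (∀ j, i < j → x j = y j) → (∀ j, j < i → guess x j = guess y j) →
          guess x i = guess y i) ∧
      (∀ x : Fin n → Fin k, {i : Fin n | guess x i ≠ x i}.Subsingleton) := by
  obtain ⟨k, rfl⟩ : ∃ m, k = m + 1 := ⟨k - 1, by omega⟩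
  set S : (Fin n → Fin (k + 1)) → Fin (k + 1) :=
    fun x => ∑ j ∈ Finset.univ.filter (fun j : Fin n => 0 < j.1), x j with hS
  refine ⟨fun x i => if i.1 = 0 then S x else x i, ?_, ?_⟩
  · intro i x y hx hg
    by_cases hi : i.1 = 0
    · simp only [hi, if_pos]
      apply Finset.sum_congr rfl
      intro j hj
      apply hx
      simp only [Finset.mem_filter] at hj
      exact Fin.lt_def.mpr (by omega)
    · simp only [hi, if_neg, ite_false]
      have h0 : S x = S y := by
        have := hg ⟨0, lt_of_le_of_lt (Nat.zero_le _) i.2⟩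
          (Fin.lt_def.mpr (Nat.pos_of_ne_zero hi))
        simpa using this
      have hi_mem : i ∈ Finset.univ.filter (fun j : Fin n => 0 < j.1) := by
        simp [Nat.pos_of_ne_zero hi]
      have hrest : ∑ j ∈ (Finset.univ.filter (fun j : Fin n => 0 < j.1)).erase i, x j
          = ∑ j ∈ (Finset.univ.filter (fun j : Fin n => 0 < j.1)).erase i, y j := by
        apply Finset.sum_congr rfl
        intro j hj
        obtain ⟨hne, hjf⟩ := Finset.mem_erase.mp hj
        simp only [Finset.mem_filter] at hjf
        rcases lt_or_gt_of_ne hne with h | h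
        · have := hg j h
          simpa [Nat.pos_iff_ne_zero.mp hjf.2] using this
        · exact hx j h
      have hx' := Finset.add_sum_erase _ x hi_mem
      have hy' := Finset.add_sum_erase _ y hi_mem
      have : x i + ∑ j ∈ (Finset.univ.filter (fun j : Fin n => 0 < j.1)).erase i, x j
          = y i + ∑ j ∈ (Finset.univ.filter (fun j : Fin n => 0 < j.1)).erase i, y j := by
        rw [hx', hy']
        exact h0
      rw [hrest] at this
      exact add_right_cancel this
  · intro x a ha b hb
    simp only [Set.mem_setOf_eq] at ha hb
    have ha0 : a.1 = 0 := by by_contra h; exact ha (by simp [h])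
    have hb0 : b.1 = 0 := by by_contra h; exact hb (by simp [h])
    exact Fin.ext (ha0.trans hb0.symm)
end

section
/- If there exists a nonprincipal (free) ultrafilter on ℕ, then there exists a parity function. -/
/-- If there exists a nonprincipal (free) ultrafilter on `ℕ`, then there exists a
parity function. -/
theorem parity_function_of_nonprincipal_ultrafilter
    (h : ∃ U : Ultrafilter ℕ, ∀ a : ℕ, U ≠ pure a) :
    ∃ p : (ℕ → Bool) → Bool,
      ∀ x y : ℕ → Bool, (∃ n : ℕ, {m | x m ≠ y m} = {n}) → p x ≠ p y := by
  classical
  obtain ⟨U, hU⟩ := h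
  have hcof : (U : Filter ℕ) ≤ Filter.cofinite := by
    rcases U.le_cofinite_or_eq_pure with h' | ⟨a, ha⟩
    · exact h'
    · exact absurd ha (hU a)
  set g : (ℕ → Bool) → ℕ → ZMod 2 :=
    fun x n => ∑ m ∈ Finset.range n, (if x m then 1 else 0) with hg
  refine ⟨fun x => decide ({n | g x n = 1} ∈ U), ?_⟩
  rintro x y ⟨k, hk⟩ hpq
  have hxy : ∀ m, m ≠ k → x m = y m := by
    intro m hm
    by_contra hne
    have : m ∈ {m | x m ≠ y m} := hne
    rw [hk] at this
    exact hm this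
  have hxk : x k ≠ y k := by
    have : k ∈ {m | x m ≠ y m} := hk ▸ rfl
    exact this
  have hdiff : ∀ n, k < n → g x n = g y n + 1 := by
    intro n hn
    have : g x n - g y n = ∑ m ∈ Finset.range n,
        ((if x m then (1 : ZMod 2) else 0) - (if y m then 1 else 0)) := by
      rw [hg]; simp [Finset.sum_sub_distrib]
    have hsum : ∑ m ∈ Finset.range n,
        ((if x m then (1 : ZMod 2) else 0) - (if y m then 1 else 0)) = 1 := by
      rw [Finset.sum_eq_single k]
      · rcases Bool.eq_false_or_eq_true (x k) with hx | hx <;>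
          rcases Bool.eq_false_or_eq_true (y k) with hy | hy <;>
          simp [hx, hy] at hxk ⊢ <;> decide
      · intro m _ hm; rw [hxy m hm]; simp
      · intro hm; exact absurd (Finset.mem_range.2 hn) hm
    have h1 : g x n - g y n = 1 := this.trans hsum
    linear_combination h1
  -- {n | k < n} ∈ U
  have hmem : {n | k < n} ∈ U := by
    apply hcof
    rw [Filter.mem_cofinite]
    have : {n | k < n}ᶜ = {n | n ≤ k} := by ext n; simp
    rw [this]
    exact Set.finite_le_nat k
  have hiff : {n | g x n = 1} ∈ U ↔ {n | g y n = 1} ∉ U := by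
    have h1 : {n | g x n = 1} ∈ U ↔ {n | g y n = 0} ∈ U := by
      constructor <;> intro hmem'
      · refine U.toFilter.mem_of_superset (Filter.inter_mem hmem' hmem) ?_
        rintro n ⟨h1, h2⟩
        have := hdiff n h2
        have : g y n + 1 = 1 := this ▸ h1
        simpa using this
      · refine U.toFilter.mem_of_superset (Filter.inter_mem hmem' hmem) ?_
        rintro n ⟨h1, h2⟩
        rw [Set.mem_setOf_eq, hdiff n h2, h1]; simp
    rw [h1]
    rw [← Ultrafilter.compl_mem_iff_notMem]
    constructor <;> intro hmem' <;>
      refine U.toFilter.mem_of_superset hmem' (fun n hn => ?_)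
    · have : g y n = 0 := hn
      simp [Set.mem_compl_iff, Set.mem_setOf_eq, this]
    · have h' : g y n ≠ 1 := hn
      have : g y n = 0 := by revert h'; generalize g y n = a; revert a; decide
      exact this
  simp only [decide_eq_decide] at hpq
  tauto
end

section
/- If there exists an E₀-transversal on ℕ → Bool, then there exists a parity function. -/
/-- If there exists an `E₀`-transversal on `ℕ → Bool`, then there exists a parity
function. -/
theorem parity_function_of_E0_transversal
    (h : ∃ T : (ℕ → Bool) → (ℕ → Bool),
        (∀ x, {n | T x n ≠ x n}.Finite) ∧
        (∀ x y, {n | x n ≠ y n}.Finite → T x = T y)) :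
    ∃ p : (ℕ → Bool) → Bool,
      ∀ x y : ℕ → Bool, (∃ n : ℕ, {m | x m ≠ y m} = {n}) → p x ≠ p y := by
  obtain ⟨T, hfin, hinv⟩ := h
  refine ⟨fun x => decide (Odd {n | T x n ≠ x n}.ncard), ?_⟩
  rintro x y ⟨n, hn⟩
  have hxy : {m | x m ≠ y m}.Finite := by rw [hn]; exact Set.finite_singleton n
  have hT : T x = T y := hinv x y hxy
  set A : Set ℕ := {m | T x m ≠ x m} with hA
  set B : Set ℕ := {m | T y m ≠ y m} with hB
  have hAf : A.Finite := hfin x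
  have hBf : B.Finite := hfin y
  have hxn : x n ≠ y n := by
    have : n ∈ {m | x m ≠ y m} := by rw [hn]; exact rfl
    exact this
  have hxm : ∀ m, m ≠ n → x m = y m := by
    intro m hm
    by_contra hc
    have : m ∈ {m | x m ≠ y m} := hc
    rw [hn] at this
    exact hm this
  -- case on whether n ∈ A
  by_cases hnA : n ∈ A
  · have hBeq : B = A \ {n} := by
      ext m
      simp only [hA, hB, Set.mem_setOf_eq, Set.mem_diff, Set.mem_singleton_iff, ← hT]
      by_cases hm : m = n
      · subst hm
        constructor
        · intro hb
          exfalso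
          have : T x m ≠ x m := hnA
          revert hb this hxn
          cases T x m <;> cases x m <;> cases y m <;> simp
        · rintro ⟨_, hc⟩; exact absurd rfl hc
      · rw [hxm m hm]; tauto
    have hcard : B.ncard + 1 = A.ncard := by
      rw [hBeq, Set.ncard_diff_singleton_add_one hnA hAf]
    simp only [ne_eq, decide_eq_decide]
    intro hiff
    have := hiff.symm
    rw [← hcard, Nat.odd_add_one] at this
    tauto
  · have hBeq : B = insert n A := by
      ext m
      simp only [hA, hB, Set.mem_setOf_eq, Set.mem_insert_iff, ← hT]
      by_cases hm : m = n
      · subst hm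
        simp only [true_or, iff_true]
        have hTn : T x m = x m := by
          by_contra hc; exact hnA hc
        rw [hTn]
        exact hxn
      · rw [hxm m hm]; tauto
    have hcard : B.ncard = A.ncard + 1 := by
      rw [hBeq, Set.ncard_insert_of_notMem hnA hAf]
    simp only [ne_eq, decide_eq_decide]
    intro hiff
    rw [hcard, Nat.odd_add_one] at hiff
    tauto
end

section
/- If there exists a nonprincipal (free) ultrafilter on ℕ, then for every k ≥ 2 there exists a k-arity function. -/
/-- If there exists a nonprincipal (free) ultrafilter on `ℕ`, then for every `k ≥ 2`
there exists a `k`-arity function. -/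
theorem k_arity_function_of_nonprincipal_ultrafilter
    (h : ∃ U : Ultrafilter ℕ, ∀ a : ℕ, U ≠ pure a) (k : ℕ) (hk : 2 ≤ k) :
    ∃ c : (ℕ → Fin k) → Fin k,
      ∀ x y : ℕ → Fin k, (∃ n : ℕ, {m | x m ≠ y m} = {n}) → c x ≠ c y := by
  obtain ⟨U, hU⟩ := h
  haveI : NeZero k := ⟨by omega⟩
  have hcof : (U : Filter ℕ) ≤ Filter.cofinite := by
    rcases U.le_cofinite_or_eq_pure with h' | ⟨a, ha⟩
    · exact h'
    · exact absurd ha (hU a)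
  -- partial sums in ZMod k
  set S : (ℕ → Fin k) → ℕ → ZMod k :=
    fun x n => ∑ i ∈ Finset.range n, ((x i : ℕ) : ZMod k) with hS
  have hlim : ∀ x : ℕ → Fin k, ∃ v : ZMod k, {n | S x n = v} ∈ U := by
    intro x
    obtain ⟨v, hv⟩ := (U.map (S x)).eq_pure_of_finite
    refine ⟨v, ?_⟩
    have : {v} ∈ U.map (S x) := by rw [hv]; exact Filter.mem_pure.2 rfl
    simpa [Filter.mem_map, Set.preimage] using this
  choose L hL using hlim
  refine ⟨fun x => ⟨(L x).val, ZMod.val_lt _⟩, ?_⟩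
  intro x y ⟨n, hn⟩ hc
  have hxy : x n ≠ y n := by
    have : n ∈ {m | x m ≠ y m} := by rw [hn]; exact rfl
    exact this
  have heq : ∀ m, m ≠ n → x m = y m := by
    intro m hm
    by_contra hmem
    have : m ∈ ({n} : Set ℕ) := hn ▸ hmem
    exact hm this
  have hLeq : L x = L y := by
    have := congrArg Fin.val hc
    simpa using ZMod.val_injective _ this
  -- on large n, S x N - S y N is a constant nonzero value
  have hbig : {N | n < N} ∈ U := hcof (Nat.cofinite_eq_atTop ▸ Filter.mem_atTop (n+1))
  have : {N | S x N = L x} ∩ ({N | S y N = L y} ∩ {N | n < N}) ∈ U :=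
    Filter.inter_mem (hL x) (Filter.inter_mem (hL y) hbig)
  obtain ⟨N, hNx, hNy, hNb⟩ := U.nonempty_of_mem this
  have hsum : S x N - S y N = ((x n : ℕ) : ZMod k) - ((y n : ℕ) : ZMod k) := by
    rw [hS]
    simp only
    rw [← Finset.sum_sub_distrib]
    rw [Finset.sum_eq_single n]
    · intro b hb hbn
      rw [heq b hbn]; ring
    · intro hnn
      exact absurd (Finset.mem_range.2 hNb) hnn
  have hcast : ((x n : ℕ) : ZMod k) ≠ ((y n : ℕ) : ZMod k) := by
    intro hh
    apply hxy
    have := congrArg ZMod.val hh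
    rw [ZMod.val_natCast_of_lt (x n).isLt, ZMod.val_natCast_of_lt (y n).isLt] at this
    exact Fin.ext this
  apply hcast
  have : S x N = S y N := by rw [hNx, hNy, hLeq]
  have h0 : S x N - S y N = 0 := by rw [this]; ring
  rw [hsum] at h0
  linear_combination h0
end

section
/- If there exists an E₀-transversal on ℕ → Bool, then for every k ≥ 2 there exists a k-arity function. -/
/-- If there exists an `E₀`-transversal on `ℕ → Bool`, then for every `k ≥ 2` there
exists a `k`-arity function. -/
theorem k_arity_function_of_E0_transversal
    (h : ∃ T : (ℕ → Bool) → (ℕ → Bool),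
        (∀ x, {n | T x n ≠ x n}.Finite) ∧
        (∀ x y, {n | x n ≠ y n}.Finite → T x = T y))
    (k : ℕ) (hk : 2 ≤ k) :
    ∃ c : (ℕ → Fin k) → Fin k,
      ∀ x y : ℕ → Fin k, (∃ n : ℕ, {m | x m ≠ y m} = {n}) → c x ≠ c y := by
  classical
  obtain ⟨T, hTfin, hTinv⟩ := h
  have hk0 : 0 < k := by omega
  haveI : NeZero k := ⟨by omega⟩
  -- encode a Fin k sequence as a Bool sequence, block n = positions n*k .. n*k+k-1
  set e : (ℕ → Fin k) → (ℕ → Bool) := fun x j => decide (j % k = (x (j / k)).val) with he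
  -- decode
  set dec : (ℕ → Bool) → ℕ → Fin k := fun b n =>
    if hs : ((Finset.range k).filter (fun i => b (n * k + i) = true)).Nonempty then
      ⟨((Finset.range k).filter (fun i => b (n * k + i) = true)).min' hs,
        Finset.mem_range.mp (Finset.mem_filter.mp
          (((Finset.range k).filter (fun i => b (n * k + i) = true)).min'_mem hs)).1⟩
    else ⟨0, hk0⟩ with hdec
  have hmod : ∀ (n i : ℕ), i < k → (n * k + i) % k = i := by
    intro n i hi
    rw [Nat.mul_comm, Nat.mul_add_mod, Nat.mod_eq_of_lt hi]
  have hdiv : ∀ (n i : ℕ), i < k → (n * k + i) / k = n := by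
    intro n i hi
    rw [Nat.mul_comm, Nat.mul_add_div hk0, Nat.div_eq_of_lt hi]
    omega
  -- decoding a block that agrees with an encoded block recovers the value
  have hdecode : ∀ (b : ℕ → Bool) (x : ℕ → Fin k) (n : ℕ),
      (∀ i, i < k → b (n * k + i) = e x (n * k + i)) → dec b n = x n := by
    intro b x n hb
    have hfilter : (Finset.range k).filter (fun i => b (n * k + i) = true)
        = {(x n).val} := by
      ext i
      simp only [Finset.mem_filter, Finset.mem_range, Finset.mem_singleton]
      constructor
      · rintro ⟨hik, hbi⟩
        rw [hb i hik] at hbi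
        simp only [he, decide_eq_true_eq, hmod n i hik, hdiv n i hik] at hbi
        exact hbi
      · rintro rfl
        refine ⟨(x n).isLt, ?_⟩
        rw [hb _ (x n).isLt]
        simp [he, hmod n _ (x n).isLt, hdiv n _ (x n).isLt]
    simp only [hdec]
    rw [dif_pos]
    · apply Fin.ext
      simp only [hfilter]
      · simp
    · rw [hfilter]; exact Finset.singleton_nonempty _
  -- the encoding respects E₀ both ways
  have hefin : ∀ x y : ℕ → Fin k, {n | x n ≠ y n}.Finite →
      {j | e x j ≠ e y j}.Finite := by
    intro x y hxy
    obtain ⟨N, hN⟩ := hxy.bddAbove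
    apply (Set.finite_Iio ((N + 1) * k) (α := ℕ)).subset
    intro j hj
    simp only [Set.mem_setOf_eq, he] at hj
    have hne : x (j / k) ≠ y (j / k) := by
      intro hc; exact hj (by rw [hc])
    have hmem : j / k ≤ N := hN hne
    exact (Nat.div_lt_iff_lt_mul hk0).mp (by omega)
  -- representative selector on ℕ → Fin k
  set r : (ℕ → Fin k) → ℕ → Fin k := fun x => dec (T (e x)) with hr
  have hrfin : ∀ x : ℕ → Fin k, {n | r x n ≠ x n}.Finite := by
    intro x
    apply ((hTfin (e x)).image (fun j => j / k)).subset
    intro n hn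
    simp only [Set.mem_setOf_eq] at hn
    by_contra hc
    simp only [Set.mem_image, Set.mem_setOf_eq, not_exists, not_and] at hc
    apply hn
    apply hdecode
    intro i hik
    by_contra hb
    exact hc (n * k + i) hb (hdiv n i hik)
  have hrinv : ∀ x y : ℕ → Fin k, {n | x n ≠ y n}.Finite → r x = r y := by
    intro x y hxy
    simp only [hr]
    rw [hTinv (e x) (e y) (hefin x y hxy)]
  -- the coloring
  set c' : (ℕ → Fin k) → ZMod k := fun x =>
    ∑ n ∈ (hrfin x).toFinset, (((x n : ℕ) : ZMod k) - ((r x n : ℕ) : ZMod k)) with hc'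
  have hsum : ∀ (x : ℕ → Fin k) (S : Finset ℕ), (hrfin x).toFinset ⊆ S →
      c' x = ∑ n ∈ S, (((x n : ℕ) : ZMod k) - ((r x n : ℕ) : ZMod k)) := by
    intro x S hS
    simp only [hc']
    apply Finset.sum_subset hS
    intro n _ hn
    simp only [Set.Finite.mem_toFinset, Set.mem_setOf_eq, not_not] at hn
    rw [hn, sub_self]
  refine ⟨fun x => ⟨(c' x).val, ZMod.val_lt _⟩, ?_⟩
  rintro x y ⟨m, hm⟩ hcxy
  have hxyfin : {n | x n ≠ y n}.Finite := by rw [hm]; exact Set.finite_singleton m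
  have hrxy : r x = r y := hrinv x y hxyfin
  have hcval : c' x = c' y := by
    have := Fin.mk.inj_iff.mp hcxy
    exact ZMod.val_injective k this
  -- compute the difference
  set S : Finset ℕ := (hrfin x).toFinset ∪ (hrfin y).toFinset with hS
  have hx : c' x = ∑ n ∈ S, (((x n : ℕ) : ZMod k) - ((r x n : ℕ) : ZMod k)) :=
    hsum x S Finset.subset_union_left
  have hy : c' y = ∑ n ∈ S, (((y n : ℕ) : ZMod k) - ((r x n : ℕ) : ZMod k)) := by
    rw [hrxy]
    exact hsum y S Finset.subset_union_right
  have hmm : x m ≠ y m := by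
    have : m ∈ {n | x n ≠ y n} := by rw [hm]; exact rfl
    exact this
  have hmS : m ∈ S := by
    by_contra hmS
    simp only [hS, Finset.mem_union, Set.Finite.mem_toFinset, Set.mem_setOf_eq,
      not_or, not_not] at hmS
    exact hmm (hmS.1 ▸ (hrxy ▸ hmS.2 : r x m = y m))
  have hdiff : c' x - c' y = ((x m : ℕ) : ZMod k) - ((y m : ℕ) : ZMod k) := by
    rw [hx, hy, ← Finset.sum_sub_distrib]
    have : ∀ n ∈ S, ((((x n : ℕ) : ZMod k) - ((r x n : ℕ) : ZMod k))
        - (((y n : ℕ) : ZMod k) - ((r x n : ℕ) : ZMod k)))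
        = ((x n : ℕ) : ZMod k) - ((y n : ℕ) : ZMod k) := by
      intro n _; ring
    rw [Finset.sum_congr rfl this]
    apply Finset.sum_eq_single_of_mem m hmS
    intro n _ hnm
    have : x n = y n := by
      by_contra hxn
      have : n ∈ ({m} : Set ℕ) := hm ▸ hxn
      exact hnm this
    rw [this, sub_self]
  have : ((x m : ℕ) : ZMod k) = ((y m : ℕ) : ZMod k) := by
    have h0 : c' x - c' y = 0 := by rw [hcval, sub_self]
    rw [h0] at hdiff
    exact sub_eq_zero.mp hdiff.symm
  have : (x m : ℕ) = (y m : ℕ) := by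
    have h1 := ZMod.val_cast_of_lt (x m).isLt
    have h2 := ZMod.val_cast_of_lt (y m).isLt
    rw [← h1, ← h2, this]
  exact hmm (Fin.ext this)
end

section
/- If there exists a parity function, then there is a strategy for the infinite two-colour hat game guaranteeing at most one wrong guess. Precisely: there exists a function guess : (ℕ → Bool) → ℕ → Bool such that (a) for every n : ℕ and all x, y : ℕ → Bool, if x m = y m for all m > n and guess x m = guess y m for all m < n, then guess x n = guess y n; and (b) for every x : ℕ → Bool, the set {n | guess x n ≠ x n} has at most one element. -/
/-- Auxiliary sequence: previous guesses below `n`, `b` at `n`, hats above `n`. -/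
def hatA (g x : ℕ → Bool) (n : ℕ) (b : Bool) : ℕ → Bool :=
  fun m => if m < n then g m else if m = n then b else x m

/-- The strategy: guess the bit making the parity function `true`. -/
noncomputable def hatG (p : (ℕ → Bool) → Bool) (x : ℕ → Bool) : ℕ → Bool
  | n => p (fun m => if h : m < n then hatG p x m else if m = n then true else x m)
decreasing_by exact h

lemma hatG_eq (p : (ℕ → Bool) → Bool) (x : ℕ → Bool) (n : ℕ) :
    hatG p x n = p (hatA (hatG p x) x n true) := by
  rw [hatG]; congr 1

lemma hatA_diff (g x : ℕ → Bool) (n : ℕ) :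
    {m | hatA g x n true m ≠ hatA g x n false m} = {n} := by
  ext m
  simp only [Set.mem_setOf_eq, Set.mem_singleton_iff, hatA]
  by_cases h : m < n
  · simp [h, Nat.ne_of_lt h]
  · by_cases h2 : m = n <;> simp [h, h2]

lemma hatG_true (p : (ℕ → Bool) → Bool)
    (hp : ∀ x y : ℕ → Bool, (∃ n : ℕ, {m | x m ≠ y m} = {n}) → p x ≠ p y)
    (x : ℕ → Bool) (n : ℕ) :
    p (hatA (hatG p x) x n (hatG p x n)) = true := by
  have hd := hp _ _ ⟨n, hatA_diff (hatG p x) x n⟩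
  have he := hatG_eq p x n
  cases hb : hatG p x n
  · rw [hb] at he
    rw [← he] at hd
    revert hd; cases p (hatA (hatG p x) x n false) <;> simp
  · rw [hb] at he; exact he.symm

/-- Every player except possibly player 0 guesses correctly. -/
lemma hatG_correct (p : (ℕ → Bool) → Bool)
    (hp : ∀ x y : ℕ → Bool, (∃ n : ℕ, {m | x m ≠ y m} = {n}) → p x ≠ p y)
    (x : ℕ → Bool) (n : ℕ) : hatG p x (n + 1) = x (n + 1) := by
  by_contra hne
  set g := hatG p x
  have hdiff : {m | hatA g x n (g n) m ≠ hatA g x (n + 1) (g (n + 1)) m} = {n + 1} := by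
    ext m
    simp only [Set.mem_setOf_eq, Set.mem_singleton_iff, hatA]
    rcases lt_trichotomy m (n + 1) with hm | hm | hm
    · have hm' : m ≤ n := Nat.lt_succ_iff.mp hm
      rcases lt_or_eq_of_le hm' with h1 | h1 <;> simp [h1, hm] <;> omega
    · subst hm
      simp [Nat.lt_irrefl]
      exact fun h => hne h.symm
    · have h1 : ¬ m < n := by omega
      have h2 : m ≠ n := by omega
      have h3 : ¬ m < n + 1 := by omega
      have h4 : m ≠ n + 1 := by omega
      simp [h1, h2, h3, h4]
  exact hp _ _ ⟨n + 1, hdiff⟩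
    (by rw [hatG_true p hp x n, hatG_true p hp x (n + 1)])

/-- If there exists a parity function, then there is a strategy for the infinite
two-colour hat game guaranteeing at most one wrong guess. -/
theorem infinite_hat_game_of_parity_function
    (h : ∃ p : (ℕ → Bool) → Bool,
        ∀ x y : ℕ → Bool, (∃ n : ℕ, {m | x m ≠ y m} = {n}) → p x ≠ p y) :
    ∃ guess : (ℕ → Bool) → ℕ → Bool,
      (∀ (n : ℕ) (x y : ℕ → Bool),
          (∀ m, n < m → x m = y m) → (∀ m, m < n → guess x m = guess y m) →
          guess x n = guess y n) ∧
      (∀ x : ℕ → Bool, {n : ℕ | guess x n ≠ x n}.Subsingleton) := by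
  obtain ⟨p, hp⟩ := h
  refine ⟨hatG p, fun n x y hx hg => ?_, fun x => ?_⟩
  · rw [hatG_eq, hatG_eq]
    congr 1
    funext m
    simp only [hatA]
    by_cases h1 : m < n
    · simp [h1, hg m h1]
    · by_cases h2 : m = n
      · simp [h1, h2]
      · have : n < m := by omega
        simp [h1, h2, hx m this]
  · intro a ha b hb
    have key : ∀ c, hatG p x c ≠ x c → c = 0 := by
      intro c hc
      cases c with
      | zero => rfl
      | succ k => exact absurd (hatG_correct p hp x k) hc
    rw [key a ha, key b hb]
end

section
/- For every k ≥ 1, if there exists a k-arity function, then there is a strategy for the infinite k-colour hat game guaranteeing at most one wrong guess. Precisely: there exists a function guess : (ℕ → Fin k) → ℕ → Fin k such that (a) for every n : ℕ and all x, y : ℕ → Fin k, if x m = y m for all m > n and guess x m = guess y m for all m < n, then guess x n = guess y n; and (b) for every x : ℕ → Fin k, the set {n | guess x n ≠ x n} has at most one element. -/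
noncomputable def hatGuess (k : ℕ) (hk : 1 ≤ k) (c : (ℕ → Fin k) → Fin k)
    (x : ℕ → Fin k) : ℕ → Fin k
  | n =>
    haveI : Nonempty (Fin k) := ⟨⟨0, hk⟩⟩
    Classical.epsilon fun a : Fin k =>
      c (fun m => if h : m < n then hatGuess k hk c x m else if m = n then a else x m)
        = (⟨0, hk⟩ : Fin k)

lemma hatUpdate_surj (k : ℕ) (c : (ℕ → Fin k) → Fin k)
    (hc : ∀ x y : ℕ → Fin k, (∃ n : ℕ, {m | x m ≠ y m} = {n}) → c x ≠ c y)
    (f : ℕ → Fin k) (n : ℕ) :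
    Function.Surjective (fun a : Fin k => c (Function.update f n a)) := by
  have hinj : Function.Injective (fun a : Fin k => c (Function.update f n a)) := by
    intro a b hab
    by_contra hne
    exact hc _ _ ⟨n, by
      ext m
      simp only [Set.mem_setOf_eq, Set.mem_singleton_iff, Function.update]
      rcases eq_or_ne m n with rfl | hmn
      · simp [hne]
      · simp [hmn]⟩ hab
  exact Finite.surjective_of_injective hinj

/-- For every `k ≥ 1`, if there exists a `k`-arity function, then there is a strategy
for the infinite `k`-colour hat game guaranteeing at most one wrong guess. -/
theorem infinite_k_colour_hat_game_of_k_arity_function (k : ℕ) (hk : 1 ≤ k)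
    (h : ∃ c : (ℕ → Fin k) → Fin k,
        ∀ x y : ℕ → Fin k, (∃ n : ℕ, {m | x m ≠ y m} = {n}) → c x ≠ c y) :
    ∃ guess : (ℕ → Fin k) → ℕ → Fin k,
      (∀ (n : ℕ) (x y : ℕ → Fin k),
          (∀ m, n < m → x m = y m) → (∀ m, m < n → guess x m = guess y m) →
          guess x n = guess y n) ∧
      (∀ x : ℕ → Fin k, {n : ℕ | guess x n ≠ x n}.Subsingleton) := by
  obtain ⟨c, hc⟩ := h
  set z : Fin k := ⟨0, hk⟩ with hz
  haveI : Nonempty (Fin k) := ⟨z⟩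
  refine ⟨hatGuess k hk c, ?_, ?_⟩
  · intro n x y hxy hg
    rw [hatGuess, hatGuess]
    congr 1
    funext a
    have : (fun m => if h : m < n then hatGuess k hk c x m else if m = n then a else x m)
        = (fun m => if h : m < n then hatGuess k hk c y m else if m = n then a else y m) := by
      funext m
      rcases lt_trichotomy m n with hm | rfl | hm
      · simp [hm, hg m hm]
      · simp
      · simp [Nat.lt_asymm hm, Nat.ne_of_gt hm, hxy m hm]
    rw [this]
  · intro x
    set g := hatGuess k hk c x with hgdef
    -- spec: for each n, c (F n) = z where F n m = if m ≤ n then g m else x m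
    have hspec : ∀ n, c (fun m => if m ≤ n then g m else x m) = z := by
      intro n
      have hbase : (fun m => if h : m < n then g m else if m = n then g n else x m)
          = (fun m => if m ≤ n then g m else x m) := by
        funext m
        rcases lt_trichotomy m n with hm | rfl | hm
        · simp [hm, Nat.le_of_lt hm]
        · simp
        · simp [Nat.lt_asymm hm, Nat.ne_of_gt hm, Nat.not_le.mpr hm]
      have hex : ∃ a : Fin k,
          c (fun m => if h : m < n then g m else if m = n then a else x m) = z := by
        have hsurj := hatUpdate_surj k c hc (fun m => if h : m < n then g m else x m) n
        obtain ⟨a, ha⟩ := hsurj z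
        refine ⟨a, ?_⟩
        convert ha using 2
        funext m
        rcases lt_trichotomy m n with hm | rfl | hm
        · simp [hm, Function.update, Nat.ne_of_lt hm]
        · simp [Function.update]
        · simp [Nat.lt_asymm hm, Nat.ne_of_gt hm, Function.update]
      have := Classical.epsilon_spec hex
      have hgn : g n = Classical.epsilon fun a : Fin k =>
          c (fun m => if h : m < n then g m else if m = n then a else x m) = z := by
        rw [hgdef]
        conv_lhs => rw [hatGuess]
      rw [← hgn] at this
      rw [← hbase]
      exact this
    -- g m = x m for m ≥ 1
    have hcorrect : ∀ n : ℕ, 0 < n → g n = x n := by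
      intro n hn
      obtain ⟨p, rfl⟩ := Nat.exists_eq_add_of_lt hn
      simp only [Nat.zero_add]
      by_contra hne
      have h1 := hspec p
      have h2 := hspec (p + 1)
      refine hc _ _ ⟨p + 1, ?_⟩ (h2.trans h1.symm)
      ext m
      simp only [Set.mem_setOf_eq, Set.mem_singleton_iff]
      rcases lt_trichotomy m (p + 1) with hm | rfl | hm
      · simp only [if_pos (Nat.le_of_lt_succ hm), if_pos (Nat.le_of_lt hm)]
        simp; omega
      · simp only [le_refl, if_pos, if_neg (Nat.not_succ_le_self p)]
        simpa using hne
      · simp only [if_neg (Nat.not_le.mpr hm), if_neg (Nat.not_le.mpr (Nat.lt_of_succ_lt hm))]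
        simp; omega
    intro a ha b hb
    simp only [Set.mem_setOf_eq] at ha hb
    have ha0 : a = 0 := by by_contra h0; exact ha (hcorrect a (Nat.pos_of_ne_zero h0))
    have hb0 : b = 0 := by by_contra h0; exact hb (hcorrect b (Nat.pos_of_ne_zero h0))
    rw [ha0, hb0]
end

section
/- The Hamming graph on ℕ → Bool has countable colouring number: there exists a well-founded linear order on ℕ → Bool such that for every x : ℕ → Bool, the set of y : ℕ → Bool with y < x and y adjacent to x in the Hamming graph is finite. -/
/-- The Hamming graph on `ℕ → Bool`: two vertices are adjacent iff they differ at
exactly one coordinate. -/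
def hammingGraph : SimpleGraph (ℕ → Bool) where
  Adj x y := ∃ n : ℕ, {m | x m ≠ y m} = {n}
  symm := by
    constructor
    rintro x y ⟨n, hn⟩
    refine ⟨n, ?_⟩
    rw [show {m | y m ≠ x m} = {m | x m ≠ y m} from by ext m; exact ne_comm, hn]
  loopless := by
    constructor
    rintro x ⟨n, hn⟩
    have : n ∈ ({n} : Set ℕ) := rfl
    rw [← hn] at this
    exact this rfl

lemma bool_flip : ∀ a b c : Bool, a ≠ b → ((a ≠ c) ↔ ¬(b ≠ c)) := by decide

/-- Finite-difference setoid on `ℕ → Bool`. -/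
def fdSetoid : Setoid (ℕ → Bool) where
  r x y := ({m | x m ≠ y m}).Finite
  iseqv := by
    refine ⟨fun x => by simp, fun {x y} h => ?_, fun {x y z} h1 h2 => ?_⟩
    · have : {m | y m ≠ x m} = {m | x m ≠ y m} := by ext m; exact ne_comm
      rw [this]; exact h
    · refine (h1.union h2).subset fun m hm => ?_
      by_cases h : x m = y m
      · exact Or.inr fun hyz => hm (h.trans hyz)
      · exact Or.inl h

/-- Representative of the finite-difference class. -/
noncomputable def fdRep (x : ℕ → Bool) : ℕ → Bool := (Quotient.mk fdSetoid x).out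

/-- The support of `x` relative to its class representative. -/
def fdSupp (x : ℕ → Bool) : Set ℕ := {m | x m ≠ fdRep x m}

lemma fdSupp_finite (x : ℕ → Bool) : (fdSupp x).Finite := by
  have h : ({m | fdRep x m ≠ x m}).Finite := Quotient.mk_out (s := fdSetoid) x
  have : fdSupp x = {m | fdRep x m ≠ x m} := by ext m; exact ne_comm
  rw [this]; exact h

/-- Size of the support. -/
noncomputable def fdn (x : ℕ → Bool) : ℕ := (fdSupp x).ncard

lemma fdRep_eq_of_adj {x y : ℕ → Bool} {k : ℕ} (h : {m | y m ≠ x m} = {k}) :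
    fdRep y = fdRep x := by
  unfold fdRep
  congr 1
  refine Quotient.sound (show ({m | y m ≠ x m}).Finite from ?_)
  rw [h]; exact Set.finite_singleton k

lemma key_supp {x y : ℕ → Bool} {k : ℕ} (h : {m | y m ≠ x m} = {k}) :
    (k ∈ fdSupp x ∧ fdSupp y = fdSupp x \ {k}) ∨
    (k ∉ fdSupp x ∧ fdSupp y = insert k (fdSupp x)) := by
  have hyk : y k ≠ x k := by
    have : k ∈ {m | y m ≠ x m} := h ▸ rfl
    exact this
  have hym : ∀ m, m ≠ k → y m = x m := by
    intro m hm
    by_contra hne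
    exact hm (h ▸ hne : m ∈ ({k} : Set ℕ))
  have hr : fdRep y = fdRep x := fdRep_eq_of_adj h
  by_cases hk : k ∈ fdSupp x
  · left
    refine ⟨hk, ?_⟩
    ext m
    simp only [fdSupp, Set.mem_setOf_eq, Set.mem_diff, Set.mem_singleton_iff, hr]
    by_cases hmk : m = k
    · subst hmk
      rw [bool_flip _ _ _ hyk]
      have hxk : x m ≠ fdRep x m := hk
      simp [hxk]
    · rw [hym m hmk]; simp [hmk]
  · right
    refine ⟨hk, ?_⟩
    ext m
    simp only [fdSupp, Set.mem_setOf_eq, Set.mem_insert_iff, hr]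
    by_cases hmk : m = k
    · subst hmk
      rw [bool_flip _ _ _ hyk]
      have hxk : ¬ (x m ≠ fdRep x m) := hk
      simp [hxk]
    · rw [hym m hmk]
      simp [hmk]

lemma key_n {x y : ℕ → Bool} {k : ℕ} (h : {m | y m ≠ x m} = {k}) :
    (k ∈ fdSupp x ∧ fdn y + 1 = fdn x) ∨ (k ∉ fdSupp x ∧ fdn y = fdn x + 1) := by
  rcases key_supp h with ⟨hk, hs⟩ | ⟨hk, hs⟩
  · left
    refine ⟨hk, ?_⟩
    unfold fdn
    rw [hs]
    exact Set.ncard_diff_singleton_add_one hk (fdSupp_finite x)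
  · right
    refine ⟨hk, ?_⟩
    unfold fdn
    rw [hs]
    exact Set.ncard_insert_of_notMem hk (fdSupp_finite x)

/-- The Hamming graph on `ℕ → Bool` has countable colouring number: there is a
well-order on `ℕ → Bool` such that every vertex has only finitely many neighbours
strictly below it. -/
theorem hammingGraph_countable_colouring_number :
    ∃ r : (ℕ → Bool) → (ℕ → Bool) → Prop,
      IsWellOrder (ℕ → Bool) r ∧
      ∀ x : ℕ → Bool, {y : ℕ → Bool | r y x ∧ hammingGraph.Adj y x}.Finite := by
  classical
  set L : (ℕ × (ℕ → Bool)) → (ℕ × (ℕ → Bool)) → Prop :=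
    Prod.Lex (· < ·) WellOrderingRel with hL
  refine ⟨fun a b => L (fdn a, a) (fdn b, b), ?_, ?_⟩
  · have emb : (fun a b => L (fdn a, a) (fdn b, b)) ↪r L :=
      ⟨⟨fun x => (fdn x, x), fun a b hab => congrArg Prod.snd hab⟩, Iff.rfl⟩
    exact emb.isWellOrder
  · intro x
    refine ((fdSupp_finite x).image (fun k => Function.update x k (!(x k)))).subset ?_
    rintro y ⟨hr, ⟨k, hk⟩⟩
    have hyk : y k ≠ x k := by
      have : k ∈ {m | y m ≠ x m} := hk ▸ rfl
      exact this
    have hym : ∀ m, m ≠ k → y m = x m := by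
      intro m hm
      by_contra hne
      exact hm (hk ▸ hne : m ∈ ({k} : Set ℕ))
    have hkx : k ∈ fdSupp x := by
      rcases key_n hk with ⟨hmem, _⟩ | ⟨_, hn⟩
      · exact hmem
      · exfalso
        rcases Prod.lex_iff.mp hr with h1 | ⟨h1, _⟩
        · simp only at h1; omega
        · simp only at h1; omega
    refine ⟨k, hkx, ?_⟩
    funext m
    show Function.update x k (!(x k)) m = y m
    rw [Function.update_apply]
    by_cases hm : m = k
    · subst hm
      rw [if_pos rfl]
      revert hyk; cases y m <;> cases x m <;> simp
    · rw [if_neg hm]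
      exact (hym m hm).symm
end

section
/- A partial 2-colouring of a bipartite graph satisfying the walk-parity compatibility condition extends to a total proper 2-colouring. Precisely: let G be a simple graph on a type X that admits a proper 2-colouring, let s ⊆ X be a set and p : X → Bool a function such that for all x, y ∈ s and every walk w in G from x to y, the length of w is even if and only if p x = p y. Then there exists a proper 2-colouring d : X → Bool of G (i.e., d x ≠ d y whenever G.Adj x y) with d x = p x for all x ∈ s. -/
lemma walk_parity_colour {X : Type*} {G : SimpleGraph X} {c : X → Bool}
    (hc : ∀ x y : X, G.Adj x y → c x ≠ c y) :
    ∀ {x y : X} (w : G.Walk x y), Even w.length ↔ c x = c y := by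
  intro x y w
  induction w with
  | nil => simp
  | @cons a b y h w ih =>
    have hab := hc _ _ h
    simp only [SimpleGraph.Walk.length_cons, Nat.even_add_one, ih]
    revert hab
    cases c a <;> cases c b <;> cases c y <;> simp

/-- A partial 2-colouring of a bipartite graph satisfying the walk-parity
compatibility condition extends to a total proper 2-colouring. -/
theorem partial_two_colouring_extends {X : Type*} (G : SimpleGraph X)
    (hbip : ∃ c : X → Bool, ∀ x y : X, G.Adj x y → c x ≠ c y)
    (s : Set X) (p : X → Bool)
    (hcompat : ∀ x ∈ s, ∀ y ∈ s, ∀ w : G.Walk x y, (Even w.length ↔ p x = p y)) :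
    ∃ d : X → Bool, (∀ x y : X, G.Adj x y → d x ≠ d y) ∧ ∀ x ∈ s, d x = p x := by
  classical
  obtain ⟨c, hc⟩ := hbip
  set F : X → Prop := fun x => ∃ a ∈ s, Nonempty (G.Walk a x) ∧ c a ≠ p a with hF
  refine ⟨fun x => if F x then !(c x) else c x, ?_, ?_⟩
  · intro x y hxy
    have hiff : F x ↔ F y := by
      constructor
      · rintro ⟨a, ha, ⟨w⟩, hne⟩
        exact ⟨a, ha, ⟨w.concat hxy⟩, hne⟩
      · rintro ⟨a, ha, ⟨w⟩, hne⟩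
        exact ⟨a, ha, ⟨w.concat hxy.symm⟩, hne⟩
    have hcxy := hc x y hxy
    by_cases h : F x
    · simp only [if_pos h, if_pos (hiff.mp h)]
      revert hcxy; cases c x <;> cases c y <;> simp
    · simp only [if_neg h, if_neg (fun h' => h (hiff.mpr h'))]
      exact hcxy
  · intro x hx
    by_cases h : F x
    · simp only [if_pos h]
      obtain ⟨a, ha, ⟨w⟩, hne⟩ := h
      have h1 := hcompat a ha x hx w
      have h2 := walk_parity_colour hc w
      have : (p a = p x) ↔ (c a = c x) := h1.symm.trans h2
      revert this hne
      cases c a <;> cases c x <;> cases p a <;> cases p x <;> simp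
    · simp only [if_neg h]
      by_contra hne
      exact h ⟨x, hx, ⟨SimpleGraph.Walk.nil⟩, hne⟩
end

section
/- If a simple graph G on X has countable colouring number, then for every countable set A ⊆ X, the set of vertices of X that are adjacent to infinitely many elements of A is countable. -/
/-- If a simple graph `G` on `X` has countable colouring number, then for every
countable set `A ⊆ X` the set of vertices adjacent to infinitely many elements of
`A` is countable. -/
theorem countable_infinitely_adjacent_of_countable_colouring_number
    {X : Type*} (G : SimpleGraph X)
    (h : ∃ r : X → X → Prop, IsWellOrder X r ∧
        ∀ v : X, {u : X | r u v ∧ G.Adj u v}.Finite)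
    (A : Set X) (hA : A.Countable) :
    {x : X | {a ∈ A | G.Adj x a}.Infinite}.Countable := by
  obtain ⟨r, hwo, hfin⟩ := h
  apply Set.Countable.mono _ (Set.Countable.biUnion hA
    (fun a _ => (hfin a).countable))
  intro x hx
  have h2 : ({a ∈ A | G.Adj x a} \ {u | r u x ∧ G.Adj u x}).Infinite :=
    hx.diff (hfin x)
  obtain ⟨a, ⟨⟨haA, hadj⟩, hnr⟩⟩ := h2.nonempty
  refine Set.mem_biUnion haA ?_
  have hne : x ≠ a := hadj.ne
  rcases (show r x a ∨ x = a ∨ r a x by by_contra hc; push_neg at hc; exact hc.2.1 (hwo.trichotomous x a hc.1 hc.2.2)) with h1 | h1 | h1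
  · exact ⟨h1, hadj⟩
  · exact absurd h1 hne
  · exact absurd ⟨h1, hadj.symm⟩ hnr
end
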